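/- Let n ≥ 4, p, q ≥ 2, u = e_1 + e_n, v = e_2 + e_{n-1}. For Z = (z_1,...,z_n) with z_k = a_k + ib_k, the matrix s_{Z,z} preserves both lines <u> and <v> if and only if a_1 + a_n = 0, b_1 + b_n = 0, a_2 + a_{n-1} = 0, b_2 + b_{n-1} = 0 (with the other a_k, b_k for 3 ≤ k ≤ n-2 and z arbitrary). -/
import Mathlib


open Complex Matrix ComplexConjugate

noncomputable section

/-- signature entries of the diagonal matrix `I = diag(1^p, (-1)^q)`. -/
def sgnCR (p k : ℕ) : ℂ := if k < p then 1 else -1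

/-- safe indexing of a vector `Z : Fin n → ℂ` by a natural number. -/
def vx {n : ℕ} (Z : Fin n → ℂ) (k : ℕ) : ℂ := if h : k < n then Z ⟨k, h⟩ else 0

/-- the pseudo-Hermitian form `m` of signature `(p+1, q+1)` on `ℂ^{n+2}`. -/
def mForm (n p : ℕ) (u v : Fin (n + 2) → ℂ) : ℂ :=
  u ⟨0, by omega⟩ * conj (v ⟨n + 1, by omega⟩) + u ⟨n + 1, by omega⟩ * conj (v ⟨0, by omega⟩)
    + ∑ k : Fin n, sgnCR p k.val * (u ⟨k.val + 1, by omega⟩ * conj (v ⟨k.val + 1, by omega⟩))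

/-- the matrix `s_{Z,z}` with rows `(-1, -Z, iz + ½ Z I Z^*)`, `(0, E, -I Z^*)`, `(0, 0, -1)`. -/
def sMat (n p : ℕ) (Z : Fin n → ℂ) (z : ℝ) : Matrix (Fin (n + 2)) (Fin (n + 2)) ℂ :=
  Matrix.of fun i j =>
    if i.val = 0 then
      if j.val = 0 then -1
      else if j.val = n + 1 then
        Complex.I * z + (1 / 2) * ∑ k : Fin n, Z k * sgnCR p k.val * conj (Z k)
      else -vx Z (j.val - 1)
    else if i.val = n + 1 then
      if j.val = n + 1 then -1 else 0
    else
      if j.val = 0 then 0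
      else if j.val = n + 1 then -(sgnCR p (i.val - 1) * conj (vx Z (i.val - 1)))
      else if i = j then 1 else 0

lemma sum_indicator_pair {N : ℕ} (f : Fin N → ℂ) (a b : ℕ) (hA : a < N) (hB : b < N)
    (hab : a ≠ b) :
    ∑ j : Fin N, f j * (if j.val = a ∨ j.val = b then 1 else 0) = f ⟨a, hA⟩ + f ⟨b, hB⟩ := by
  have h : ∀ j : Fin N, f j * (if j.val = a ∨ j.val = b then (1:ℂ) else 0)
      = (if j = ⟨a, hA⟩ then f ⟨a, hA⟩ else 0) + (if j = ⟨b, hB⟩ then f ⟨b, hB⟩ else 0) := by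
    intro j
    by_cases h1 : j = ⟨a, hA⟩
    · subst h1
      simp [Fin.ext_iff, hab]
    · by_cases h2 : j = ⟨b, hB⟩
      · subst h2
        simp [Fin.ext_iff, Ne.symm hab]
      · have h1' : j.val ≠ a := fun h => h1 (Fin.ext h)
        have h2' : j.val ≠ b := fun h => h2 (Fin.ext h)
        simp [h1, h2, h1', h2']
  simp [h, Finset.sum_add_distrib]

lemma mulVec_pair (n p : ℕ) (Z : Fin n → ℂ) (z : ℝ) (a b : ℕ) (ha : 1 ≤ a) (ha' : a ≤ n)
    (hb : 1 ≤ b) (hb' : b ≤ n) (hab : a ≠ b) :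
    (sMat n p Z z).mulVec (fun j => if j.val = a ∨ j.val = b then 1 else 0)
      = fun i => if i.val = 0 then -(vx Z (a - 1) + vx Z (b - 1))
          else if i.val = a ∨ i.val = b then 1 else 0 := by
  funext i
  have hA : a < n + 2 := by omega
  have hB : b < n + 2 := by omega
  rw [Matrix.mulVec, dotProduct, sum_indicator_pair _ a b hA hB hab]
  have hva : ¬ ((⟨a, hA⟩ : Fin (n+2)).val = 0) := by simp; omega
  have hva' : ¬ ((⟨a, hA⟩ : Fin (n+2)).val = n + 1) := by simp; omega
  have hvb : ¬ ((⟨b, hB⟩ : Fin (n+2)).val = 0) := by simp; omega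
  have hvb' : ¬ ((⟨b, hB⟩ : Fin (n+2)).val = n + 1) := by simp; omega
  rcases eq_or_ne i.val 0 with h0 | h0
  · simp only [sMat, Matrix.of_apply, h0, if_pos rfl, hva, hva', hvb, hvb', ite_false, if_true]
    ring
  · rcases eq_or_ne i.val (n + 1) with h1 | h1
    · have hiab : ¬ (i.val = a ∨ i.val = b) := by omega
      simp only [sMat, Matrix.of_apply, h0, h1, hva', hvb', hiab, ite_false, if_pos rfl, if_true]
      simp [show ¬(n + 1 = a ∨ n + 1 = b) from by omega]
    · simp only [sMat, Matrix.of_apply, if_neg h0, if_neg h1, hva, hva', hvb, hvb', ite_false]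
      rcases eq_or_ne i.val a with h2 | h2
      · have hia : i = ⟨a, hA⟩ := Fin.ext h2
        have hib : i ≠ ⟨b, hB⟩ := by simp [Fin.ext_iff]; omega
        simp [hia, hib, Fin.ext_iff, h2, hab]
      · rcases eq_or_ne i.val b with h3 | h3
        · have hib : i = ⟨b, hB⟩ := Fin.ext h3
          have hia : i ≠ ⟨a, hA⟩ := by simp [Fin.ext_iff]; omega
          have hba : ¬ (b = a) := fun h => hab h.symm
          simp [hib, hia, Fin.ext_iff, h3, hba]
        · have hia : i ≠ ⟨a, hA⟩ := by simp [Fin.ext_iff]; omega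
          have hib : i ≠ ⟨b, hB⟩ := by simp [Fin.ext_iff]; omega
          simp [hia, hib, h2, h3]

lemma preserve_iff (n p : ℕ) (Z : Fin n → ℂ) (z : ℝ) (a b : ℕ) (ha : 1 ≤ a) (ha' : a ≤ n)
    (hb : 1 ≤ b) (hb' : b ≤ n) (hab : a ≠ b) :
    (∃ c : ℂ, (sMat n p Z z).mulVec (fun j => if j.val = a ∨ j.val = b then 1 else 0)
      = c • (fun j : Fin (n + 2) => if j.val = a ∨ j.val = b then (1:ℂ) else 0)) ↔
    vx Z (a - 1) + vx Z (b - 1) = 0 := by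
  rw [mulVec_pair n p Z z a b ha ha' hb hb' hab]
  have hc0 : ¬ ((0:ℕ) = a ∨ (0:ℕ) = b) := by omega
  constructor
  · rintro ⟨c, hc⟩
    have h0 := congrFun hc ⟨0, by omega⟩
    simp only [Pi.smul_apply, smul_eq_mul] at h0
    rw [if_pos trivial, if_neg hc0, mul_zero, neg_eq_zero] at h0
    exact h0
  · intro hx
    refine ⟨1, funext fun i => ?_⟩
    rcases eq_or_ne i.val 0 with h0 | h0
    · simp [h0, hc0, hx]
    · simp [h0]

/-- for `n ≥ 4`, `p, q ≥ 2`, `u = e₁ + e_n`, `v = e₂ + e_{n-1}`, the matrix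
`s_{Z,z}` preserves both lines `⟨u⟩` and `⟨v⟩` if and only if `a₁ + a_n = 0`,
`b₁ + b_n = 0`, `a₂ + a_{n-1} = 0`, `b₂ + b_{n-1} = 0` (writing `z_k = a_k + i b_k` for
the entries of `Z`, with the other entries and `z` arbitrary). -/
theorem example_case4 (n p : ℕ) (hn : 4 ≤ n) (hp : 2 ≤ p) (hq : p + 2 ≤ n)
    (Z : Fin n → ℂ) (z : ℝ) :
    let u : Fin (n + 2) → ℂ := fun j => if j.val = 1 ∨ j.val = n then 1 else 0
    let v : Fin (n + 2) → ℂ := fun j => if j.val = 2 ∨ j.val = n - 1 then 1 else 0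
    ((∃ c : ℂ, (sMat n p Z z).mulVec u = c • u) ∧
     (∃ d : ℂ, (sMat n p Z z).mulVec v = d • v)) ↔
    ((vx Z 0).re + (vx Z (n - 1)).re = 0 ∧ (vx Z 0).im + (vx Z (n - 1)).im = 0 ∧
     (vx Z 1).re + (vx Z (n - 2)).re = 0 ∧ (vx Z 1).im + (vx Z (n - 2)).im = 0) := by
  intro u v
  rw [show u = fun j : Fin (n + 2) => if j.val = 1 ∨ j.val = n then (1:ℂ) else 0 from rfl,
    show v = fun j : Fin (n + 2) => if j.val = 2 ∨ j.val = n - 1 then (1:ℂ) else 0 from rfl,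
    preserve_iff n p Z z 1 n le_rfl (by omega) (by omega) le_rfl (by omega),
    preserve_iff n p Z z 2 (n - 1) (by omega) (by omega) (by omega) (by omega) (by omega)]
  have e1 : (1 : ℕ) - 1 = 0 := rfl
  have e2 : (2 : ℕ) - 1 = 1 := rfl
  have e3 : n - 1 - 1 = n - 2 := by omega
  rw [e1, e2, e3]
  simp only [Complex.ext_iff, Complex.add_re, Complex.add_im, Complex.zero_re, Complex.zero_im]
  tauto
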